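/- Let (g₁, g₂) ∈ SL(2,ℂ)² satisfy ((tr g₁)² ≠ 4 or (tr g₂)² ≠ 4) and tr(g₁ g₂ g₁⁻¹ g₂⁻¹) ≠ 2. If h ∈ SL(2,ℂ) commutes with both g₁ and g₂, then h = 1 or h = −1. That is, the centralizer of any element of G₂ is the center {±1} of SL(2,ℂ). -/
import Mathlib
open Matrix
open scoped MatrixGroups

lemma key_comm (a b c d p q r s p' q' r' s' : ℂ)
    (hns : ¬(b = 0 ∧ c = 0 ∧ a = d))
    (h1 : b*r = q*c) (h2 : q*(a-d) = b*(p-s)) (h3 : r*(a-d) = c*(p-s))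
    (h1' : b*r' = q'*c) (h2' : q'*(a-d) = b*(p'-s')) (h3' : r'*(a-d) = c*(p'-s')) :
    q*r' = q'*r ∧ p*q' + q*s' = p'*q + q'*s ∧ r*p' + s*r' = r'*p + s'*r := by
  by_cases hb : b = 0
  · subst hb
    by_cases hc : c = 0
    · subst hc
      have had : a - d ≠ 0 := fun hd => hns ⟨rfl, rfl, sub_eq_zero.mp hd⟩
      have hq : q = 0 := by
        rcases mul_eq_zero.mp (by linear_combination h2 : q * (a-d) = 0) with h | h
        · exact h
        · exact absurd h had
      have hr : r = 0 := by
        rcases mul_eq_zero.mp (by linear_combination h3 : r * (a-d) = 0) with h | h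
        · exact h
        · exact absurd h had
      have hq' : q' = 0 := by
        rcases mul_eq_zero.mp (by linear_combination h2' : q' * (a-d) = 0) with h | h
        · exact h
        · exact absurd h had
      have hr' : r' = 0 := by
        rcases mul_eq_zero.mp (by linear_combination h3' : r' * (a-d) = 0) with h | h
        · exact h
        · exact absurd h had
      refine ⟨by simp [hq, hq', hr, hr'], by simp [hq, hq', mul_comm], by simp [hr, hr']⟩
    · have hq : q = 0 := by
        rcases mul_eq_zero.mp (by linear_combination -h1 : q * c = 0) with h | h
        · exact h
        · exact absurd h hc
      have hq' : q' = 0 := by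
        rcases mul_eq_zero.mp (by linear_combination -h1' : q' * c = 0) with h | h
        · exact h
        · exact absurd h hc
      refine ⟨by simp [hq, hq'], by simp [hq, hq', mul_comm], ?_⟩
      have key : c * (r*p' + s*r' - (r'*p + s'*r)) = 0 := by
        linear_combination r'*h3 - r*h3'
      rcases mul_eq_zero.mp key with h | h
      · exact absurd h hc
      · linear_combination h
  · refine ⟨?_, ?_, ?_⟩
    · have key : b * (q*r' - q'*r) = 0 := by linear_combination q*h1' - q'*h1
      rcases mul_eq_zero.mp key with h | h
      · exact absurd h hb
      · linear_combination h
    · have key : b * (p*q' + q*s' - (p'*q + q'*s)) = 0 := by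
        linear_combination q*h2' - q'*h2
      rcases mul_eq_zero.mp key with h | h
      · exact absurd h hb
      · linear_combination h
    · have key : b * (b * (r*p' + s*r' - (r'*p + s'*r))) = 0 := by
        linear_combination b*(p'-s')*h1 - q*c*h2' - b*(p-s)*h1' + q'*c*h2
      rcases mul_eq_zero.mp key with h | h
      · exact absurd h hb
      · rcases mul_eq_zero.mp h with h | h
        · exact absurd h hb
        · linear_combination h

/-- The centralizer of any element of `G₂` is the center `{±1}` of `SL(2,ℂ)`. -/
theorem centralizer_of_G2_is_center
    (g₁ g₂ h : SL(2, ℂ))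
    (hreg : (Matrix.trace ((g₁ : Matrix (Fin 2) (Fin 2) ℂ))) ^ 2 ≠ 4 ∨
      (Matrix.trace ((g₂ : Matrix (Fin 2) (Fin 2) ℂ))) ^ 2 ≠ 4)
    (hcomm : Matrix.trace (((g₁ * g₂ * g₁⁻¹ * g₂⁻¹ : SL(2, ℂ)) : Matrix (Fin 2) (Fin 2) ℂ)) ≠ 2)
    (hc₁ : h * g₁ = g₁ * h) (hc₂ : h * g₂ = g₂ * h) :
    h = 1 ∨ h = -1 := by
  set A : Matrix (Fin 2) (Fin 2) ℂ := (h : Matrix (Fin 2) (Fin 2) ℂ) with hA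
  by_cases hsc : A 0 1 = 0 ∧ A 1 0 = 0 ∧ A 0 0 = A 1 1
  · obtain ⟨hb, hc, had⟩ := hsc
    have hdet : A.det = 1 := h.2
    rw [Matrix.det_fin_two] at hdet
    have hsq : (A 0 0 - 1) * (A 0 0 + 1) = 0 := by
      linear_combination hdet + (A 0 0) * had + (A 0 1) * hc
    rcases mul_eq_zero.mp hsq with h1 | h1
    · left
      ext i j
      fin_cases i <;> fin_cases j <;>
        simp [← hA, hb, hc, ← had, sub_eq_zero.mp h1, Matrix.one_apply]
    · right
      have h1' : A 0 0 = -1 := by linear_combination h1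
      ext i j
      fin_cases i <;> fin_cases j <;>
        simp [← hA, hb, hc, ← had, h1', Matrix.one_apply]
  · -- non-scalar case: g₁ and g₂ commute, contradiction
    have e₁ : A * (g₁ : Matrix (Fin 2) (Fin 2) ℂ) = (g₁ : Matrix (Fin 2) (Fin 2) ℂ) * A := by
      have := congrArg (fun x : SL(2,ℂ) => (x : Matrix (Fin 2) (Fin 2) ℂ)) hc₁
      simpa using this
    have e₂ : A * (g₂ : Matrix (Fin 2) (Fin 2) ℂ) = (g₂ : Matrix (Fin 2) (Fin 2) ℂ) * A := by
      have := congrArg (fun x : SL(2,ℂ) => (x : Matrix (Fin 2) (Fin 2) ℂ)) hc₂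
      simpa using this
    set G : Matrix (Fin 2) (Fin 2) ℂ := (g₁ : Matrix (Fin 2) (Fin 2) ℂ) with hG
    set K : Matrix (Fin 2) (Fin 2) ℂ := (g₂ : Matrix (Fin 2) (Fin 2) ℂ) with hK
    have E00 := congrFun (congrFun e₁ 0) 0
    have E01 := congrFun (congrFun e₁ 0) 1
    have E10 := congrFun (congrFun e₁ 1) 0
    have F00 := congrFun (congrFun e₂ 0) 0
    have F01 := congrFun (congrFun e₂ 0) 1
    have F10 := congrFun (congrFun e₂ 1) 0
    simp only [Matrix.mul_apply, Fin.sum_univ_two] at E00 E01 E10 F00 F01 F10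
    obtain ⟨K1, K2, K3⟩ := key_comm (A 0 0) (A 0 1) (A 1 0) (A 1 1)
      (G 0 0) (G 0 1) (G 1 0) (G 1 1) (K 0 0) (K 0 1) (K 1 0) (K 1 1) hsc
      (by linear_combination E00) (by linear_combination E01) (by linear_combination -E10)
      (by linear_combination F00) (by linear_combination F01) (by linear_combination -F10)
    have hcom : g₁ * g₂ = g₂ * g₁ := by
      ext i j
      fin_cases i <;> fin_cases j <;>
        simp only [Matrix.SpecialLinearGroup.coe_mul, Matrix.mul_apply, Fin.sum_univ_two, Fin.mk_zero, Fin.mk_one,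
          ← hG, ← hK]
      · linear_combination K1
      · linear_combination K2
      · linear_combination K3
      · linear_combination -K1
    have hone : g₁ * g₂ * g₁⁻¹ * g₂⁻¹ = 1 := by
      rw [mul_inv_eq_one, mul_inv_eq_iff_eq_mul]
      exact hcom
    refine absurd ?_ hcomm
    rw [hone]
    simp [Matrix.trace_one]
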